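/- Let N be a finite set of agents with monotone valuations v_i : 2^M → ℝ≥0, let (𝒳, μ) be an allocation with bundle family 𝒳 = (X_i)_{i∈N}, and let (G, w) = G(𝒳, μ) be its assign-envy graph. If C is a directed cycle in the auxiliary graph G_μ (where the perfect matching μ's edges are reversed), then its auxiliary weight is negative: w_μ(C) < 0. -/

import Mathlib

/-!  Common setup for fair division: agents `N`, items `I`, monotone valuations
`v : N → Finset I → ℝ`, allocations `(𝒳, μ)` given by a bundle family `X : N → Finset I`
and a bijection `σ : Equiv.Perm N` on indices (agent `i` receives bundle `X (σ i)`),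
the assign-envy graph, and its auxiliary directed graph. -/

variable {N I : Type*}

/-- Weight of a walk in a directed graph, given by its list of vertices. -/
def walkWeight {V : Type*} (W : V → V → ℝ) (l : List V) : ℝ :=
  ((l.zip l.tail).map fun p => W p.1 p.2).sum

/-- A (simple) directed cycle, given by the list of its vertices (the closing edge
from the last vertex back to the first is implicit). -/
def IsDiCycle {V : Type*} (adj : V → V → Prop) (l : List V) : Prop :=
  l ≠ [] ∧ l.Nodup ∧ (l ++ l.take 1).Chain' adj

/-- Total weight of a directed cycle (including the closing edge). -/
def cycleWeight {V : Type*} (W : V → V → ℝ) (l : List V) : ℝ :=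
  walkWeight W (l ++ l.take 1)

/-- Adjacency (on indices) of the assign-envy graph `G(𝒳, μ)` of the allocation `(X, σ)`:
agent `i` is joined to its own bundle `X (σ i)` and to every bundle it envies. -/
def aeAdj (v : N → Finset I → ℝ) (X : N → Finset I) (σ : Equiv.Perm N) (i j : N) : Prop :=
  j = σ i ∨ v i (X (σ i)) < v i (X j)

/-- Edge weights of the assign-envy graph: `w(i, X_j) = −v_i(X_j)`. -/
def aeW (v : N → Finset I → ℝ) (X : N → Finset I) (i j : N) : ℝ := - v i (X j)

/-- Auxiliary directed graph of a bipartite graph on `N ⊕ N` (agents on the left, bundle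
indices on the right) with respect to the perfect matching given by a permutation `τ`:
non-matching edges go left-to-right, matching edges are reversed. -/
def aeAux (adj : N → N → Prop) (τ : Equiv.Perm N) : N ⊕ N → N ⊕ N → Prop
  | Sum.inl i, Sum.inr j => adj i j ∧ j ≠ τ i
  | Sum.inr j, Sum.inl i => j = τ i
  | _, _ => False

/-- Auxiliary weights on the auxiliary directed graph: forward edges keep their weight,
reversed matching edges get the negated weight. -/
def aeAuxW (W : N → N → ℝ) : N ⊕ N → N ⊕ N → ℝ
  | Sum.inl i, Sum.inr j => W i j
  | Sum.inr j, Sum.inl i => - W i j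
  | _, _ => 0

/-- EF1 (envy-freeness up to one item) for a family of assigned bundles `Y : N → Finset I`. -/
def EF1 [DecidableEq I] (v : N → Finset I → ℝ) (Y : N → Finset I) : Prop :=
  ∀ i j : N, v i (Y i) ≥ v i (Y j) ∨ ∃ k ∈ Y j, v i (Y i) ≥ v i ((Y j).erase k)

section AuxLemmas

variable (v : N → Finset I → ℝ) (X : N → Finset I) (σ : Equiv.Perm N)

/-- Potential function on vertices of the auxiliary graph. -/
noncomputable def aePhi : N ⊕ N → ℝ := Sum.elim (fun i => v i (X (σ i))) (fun _ => 0)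

lemma walkWeight_cons {V : Type*} (W : V → V → ℝ) (a b : V) (l : List V) :
    walkWeight W (a :: b :: l) = W a b + walkWeight W (b :: l) := by
  simp [walkWeight]

lemma aux_edge_le {a b : N ⊕ N} (h : aeAux (aeAdj v X σ) σ a b) :
    aeAuxW (aeW v X) a b ≤ aePhi v X σ b - aePhi v X σ a := by
  cases a with
  | inl i =>
    cases b with
    | inl i' => exact absurd h (by simp [aeAux])
    | inr j =>
      simp only [aeAux, aeAdj] at h
      have henvy : v i (X (σ i)) < v i (X j) := h.1.resolve_left h.2
      simp only [aeAuxW, aeW, aePhi, Sum.elim_inl, Sum.elim_inr]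
      linarith
  | inr j =>
    cases b with
    | inl i =>
      simp only [aeAux] at h
      subst h
      simp [aeAuxW, aeW, aePhi]
    | inr j' => exact absurd h (by simp [aeAux])

lemma aux_edge_lt {i : N} {b : N ⊕ N} (h : aeAux (aeAdj v X σ) σ (Sum.inl i) b) :
    aeAuxW (aeW v X) (Sum.inl i) b < aePhi v X σ b - aePhi v X σ (Sum.inl i) := by
  cases b with
  | inl i' => exact absurd h (by simp [aeAux])
  | inr j =>
    simp only [aeAux, aeAdj] at h
    have henvy : v i (X (σ i)) < v i (X j) := h.1.resolve_left h.2
    simp only [aeAuxW, aeW, aePhi, Sum.elim_inl, Sum.elim_inr]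
    linarith

lemma chain_walk_le : ∀ (l : List (N ⊕ N)) (a : N ⊕ N),
    List.Chain' (aeAux (aeAdj v X σ) σ) (a :: l) →
    walkWeight (aeAuxW (aeW v X)) (a :: l) ≤
      aePhi v X σ ((a :: l).getLast (List.cons_ne_nil a l)) - aePhi v X σ a := by
  intro l
  induction l with
  | nil => intro a _; simp [walkWeight]
  | cons b t ih =>
    intro a hch
    unfold List.Chain' at hch
    rw [List.isChain_cons_cons] at hch
    have h1 := aux_edge_le v X σ hch.1
    have h2 := ih b hch.2
    rw [walkWeight_cons]
    rw [List.getLast_cons (List.cons_ne_nil b t)]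
    linarith

lemma chain_walk_lt (l : List (N ⊕ N)) (hl : l ≠ []) (i : N)
    (hch : List.Chain' (aeAux (aeAdj v X σ) σ) (Sum.inl i :: l)) :
    walkWeight (aeAuxW (aeW v X)) (Sum.inl i :: l) <
      aePhi v X σ ((Sum.inl i :: l).getLast (List.cons_ne_nil _ l)) -
        aePhi v X σ (Sum.inl i) := by
  obtain ⟨b, t, rfl⟩ : ∃ b t, l = b :: t := by
    cases l with
    | nil => exact absurd rfl hl
    | cons b t => exact ⟨b, t, rfl⟩
  unfold List.Chain' at hch
  rw [List.isChain_cons_cons] at hch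
  have h1 := aux_edge_lt v X σ hch.1
  have h2 := chain_walk_le v X σ t b hch.2
  rw [walkWeight_cons]
  rw [List.getLast_cons (List.cons_ne_nil b t)]
  linarith

end AuxLemmas

/-- Any directed cycle of the auxiliary graph `G_μ` of the assign-envy graph
`G(𝒳, μ)` of an allocation `(X, σ)` has negative auxiliary weight. -/
theorem assign_envy_cycle_negative
    [Fintype N] [Fintype I] [DecidableEq I]
    (v : N → Finset I → ℝ) (X : N → Finset I) (σ : Equiv.Perm N) (C : List (N ⊕ N))
    (hmono : ∀ i : N, ∀ A B : Finset I, A ⊆ B → v i A ≤ v i B)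
    (hnonneg : ∀ (i : N) (A : Finset I), 0 ≤ v i A)
    (hdisj : ∀ i j : N, i ≠ j → Disjoint (X i) (X j))
    (hC : IsDiCycle (aeAux (aeAdj v X σ) σ) C) :
    cycleWeight (aeAuxW (aeW v X)) C < 0 := by
  obtain ⟨hne, _, hch⟩ := hC
  obtain ⟨x, t, rfl⟩ : ∃ x t, C = x :: t := by
    cases C with
    | nil => exact absurd rfl hne
    | cons x t => exact ⟨x, t, rfl⟩
  have hL : (x :: t) ++ (x :: t).take 1 = x :: (t ++ [x]) := by simp
  rw [hL] at hch
  have hlast : (x :: (t ++ [x])).getLast (List.cons_ne_nil _ _) = x := by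
    rw [List.getLast_cons (by simp : t ++ [x] ≠ [])]
    simp
  unfold cycleWeight
  rw [hL]
  cases x with
  | inl i =>
    have := chain_walk_lt v X σ (t ++ [Sum.inl i]) (by simp) i hch
    rw [hlast] at this
    linarith
  | inr j =>
    obtain ⟨c, t', rfl⟩ : ∃ c t', t = c :: t' := by
      cases t with
      | nil =>
        exfalso
        simp only [List.Chain', List.nil_append, List.isChain_cons_cons, List.isChain_singleton,
          and_true] at hch
        exact hch
      | cons c t' => exact ⟨c, t', rfl⟩
    unfold List.Chain' at hch
    rw [List.cons_append, List.isChain_cons_cons] at hch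
    obtain ⟨hedge, hch'⟩ := hch
    obtain ⟨i, rfl⟩ : ∃ i, c = Sum.inl i := by
      cases c with
      | inl i => exact ⟨i, rfl⟩
      | inr j' => exact absurd hedge (by simp [aeAux])
    have hji : j = σ i := hedge
    have h2 := chain_walk_lt v X σ (t' ++ [Sum.inr j]) (by simp) i hch'
    have hlast2 : ((Sum.inl i : N ⊕ N) :: (t' ++ [Sum.inr j])).getLast
        (List.cons_ne_nil _ _) = Sum.inr j := by
      rw [List.getLast_cons (by simp : t' ++ [Sum.inr j] ≠ [])]
      simp
    rw [hlast2] at h2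
    simp only [List.cons_append]
    rw [walkWeight_cons]
    have hw : aeAuxW (aeW v X) (Sum.inr j) (Sum.inl i) = v i (X j) := by
      simp [aeAuxW, aeW]
    have hphi1 : aePhi v X σ (Sum.inl i) = v i (X (σ i)) := rfl
    have hphi2 : aePhi v X σ (Sum.inr j) = 0 := rfl
    rw [hw]
    rw [hphi1, hphi2, hji] at h2
    rw [hji]
    linarith
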